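/- Let D > 0 and H > 0 be real numbers, let ψ₀, ψ_H ∈ ℝ, and let ψ(s) = ψ₀ + (ψ_H − ψ₀)·s/H be the linear normalized potential on [0, H]. Suppose c : [0, H] → ℝ is differentiable and there exists a constant J ∈ ℝ such that the Nernst–Planck flux is constant, i.e. −D·(c'(s) + c(s)·ψ'(s)) = J for all s ∈ [0, H]. Then the flux is given exactly by the Scharfetter–Gummel formula: J = (D/H)·(Be(ψ_H − ψ₀)·c(0) − Be(−(ψ_H − ψ₀))·c(H)). -/

import Mathlib

/-- The inverse Bernoulli function `Be(x) = x / (exp x - 1)`, with `Be 0 = 1`. -/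
noncomputable def Be (x : ℝ) : ℝ := if x = 0 then 1 else x / (Real.exp x - 1)

/-- If the Nernst–Planck flux of a differentiable concentration `c` in a linear
normalized potential `ψ` is constant equal to `J` on `[0, H]`, then `J` is given by
the Scharfetter–Gummel formula. -/
theorem scharfetter_gummel_flux
    (D H ψ₀ ψH J : ℝ) (hD : 0 < D) (hH : 0 < H)
    (ψ : ℝ → ℝ) (hψ : ∀ s : ℝ, ψ s = ψ₀ + (ψH - ψ₀) * s / H)
    (c c' : ℝ → ℝ)
    (hc : ∀ s ∈ Set.Icc (0 : ℝ) H, HasDerivAt c (c' s) s)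
    (hflux : ∀ s ∈ Set.Icc (0 : ℝ) H,
      -D * (c' s + c s * deriv ψ s) = J) :
    J = (D / H) * (Be (ψH - ψ₀) * c 0 - Be (-(ψH - ψ₀)) * c H) := by
  have hH' : H ≠ 0 := hH.ne'
  have hDne : D ≠ 0 := hD.ne'
  set x := ψH - ψ₀ with hx
  have hψd : ∀ s : ℝ, deriv ψ s = x / H := by
    intro s
    have hfun : ψ = fun t => ψ₀ + x / H * t := by
      funext t; rw [hψ]; ring
    have h : HasDerivAt (fun t => ψ₀ + x / H * t) (x / H) s := by
      simpa using ((hasDerivAt_id s).const_mul (x / H)).const_add ψ₀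
    rw [hfun]; exact h.deriv
  have hA : ∀ s ∈ Set.Icc (0 : ℝ) H, c' s + c s * (x / H) = -(J / D) := by
    intro s hs
    have h := hflux s hs
    rw [hψd] at h
    have h2 : -D * (c' s + c s * (x / H)) = -D * -(J / D) := by
      rw [h]; field_simp
    exact mul_left_cancel₀ (neg_ne_zero.mpr hDne) h2
  by_cases hx0 : x = 0
  · -- linear case
    set g : ℝ → ℝ := fun s => c s + (J / D) * s with hg
    have hd : ∀ s ∈ Set.Icc (0 : ℝ) H, HasDerivAt g 0 s := by
      intro s hs
      have h1 : HasDerivAt g (c' s + J / D) s := by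
        exact ((hc s hs).add ((hasDerivAt_id s).const_mul (J / D))).congr_deriv (by ring)
      have h2 := hA s hs
      rw [hx0] at h2
      simp only [zero_div, mul_zero, add_zero] at h2
      have : c' s + J / D = 0 := by rw [h2]; ring
      rwa [this] at h1
    have hconst := constant_of_has_deriv_right_zero
      (f := g) (a := 0) (b := H)
      (fun s hs => ((hd s hs).continuousAt).continuousWithinAt)
      (fun s hs => ((hd s (Set.Ico_subset_Icc_self hs)).hasDerivWithinAt))
    have hgH : g H = g 0 := hconst H (Set.right_mem_Icc.mpr hH.le)
    simp only [hg] at hgH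
    have hx' : ψH - ψ₀ = 0 := hx0
    rw [show Be (ψH - ψ₀) = 1 by simp [Be, hx'],
        show Be (-(ψH - ψ₀)) = 1 by simp [Be, hx']]
    field_simp at hgH ⊢
    nlinarith [hgH]
  · -- exponential case
    set k : ℝ := x / H with hk
    have hkne : k ≠ 0 := div_ne_zero hx0 hH'
    set g : ℝ → ℝ := fun s => (c s + J / (D * k)) * Real.exp (k * s) with hg
    have hd : ∀ s ∈ Set.Icc (0 : ℝ) H, HasDerivAt g 0 s := by
      intro s hs
      have he : HasDerivAt (fun t => Real.exp (k * t)) (Real.exp (k * s) * k) s := by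
        simpa using (((hasDerivAt_id s).const_mul k).exp)
      have h1 : HasDerivAt g
          (c' s * Real.exp (k * s) + (c s + J / (D * k)) * (Real.exp (k * s) * k)) s :=
        ((hc s hs).add_const (J / (D * k))).mul he
      have h2 := hA s hs
      have hz : c' s * Real.exp (k * s) + (c s + J / (D * k)) * (Real.exp (k * s) * k) = 0 := by
        have hc' : c' s = -(J / D) - c s * k := by linarith
        rw [hc']
        field_simp
        ring
      rwa [hz] at h1
    have hconst := constant_of_has_deriv_right_zero
      (f := g) (a := 0) (b := H)
      (fun s hs => ((hd s hs).continuousAt).continuousWithinAt)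
      (fun s hs => ((hd s (Set.Ico_subset_Icc_self hs)).hasDerivWithinAt))
    have hgH : (c H + J / (D * k)) * Real.exp (k * H)
        = (c 0 + J / (D * k)) * Real.exp (k * 0) :=
      hconst H (Set.right_mem_Icc.mpr hH.le)
    have hkH : k * H = x := by rw [hk]; field_simp
    rw [hkH, mul_zero, Real.exp_zero, mul_one, hk] at hgH
    have hexpos : Real.exp x ≠ 0 := (Real.exp_pos x).ne'
    have hexne : Real.exp x - 1 ≠ 0 := by
      intro h
      exact hx0 (Real.exp_injective (by rw [Real.exp_zero]; linarith))
    rw [show Be (ψH - ψ₀) = x / (Real.exp x - 1) by rw [← hx]; simp [Be, hx0],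
        show Be (-(ψH - ψ₀)) = x * Real.exp x / (Real.exp x - 1) by
          rw [← hx]
          have hne : (-x : ℝ) ≠ 0 := neg_ne_zero.mpr hx0
          simp only [Be, if_neg hne, Real.exp_neg]
          have h1 : (Real.exp x)⁻¹ - 1 ≠ 0 := by
            intro h
            apply hexne
            have h2 : (Real.exp x)⁻¹ = 1 := by linarith
            have h3 : Real.exp x = 1 := by
              field_simp at h2; linarith
            linarith
          rw [div_eq_div_iff h1 hexne]
          field_simp
          ring]
    field_simp at hgH ⊢
    nlinarith [hgH]
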